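/- Let (P,⪯) be a finite poset and consider the induced double poset (P,⪯,⪯). Then the polar of its double order polytope equals the twisted prism of the negated valuation polytope: T_O(P,⪯,⪯)° = conv(((−Val(P)) × {1}) ∪ (Val(P) × {−1})) ⊆ ℝ^P × ℝ. -/

import Mathlib

open Set Pointwise

/-- The order polytope of a finite poset `(P, le)`: order-preserving maps into `[0,1]`. -/
def orderPoly (P : Type*) [Fintype P] (le : P → P → Prop) : Set (P → ℝ) :=
  {f | (∀ a, 0 ≤ f a ∧ f a ≤ 1) ∧ ∀ a b, le a b → f a ≤ f b}

/-- The double order polytope `T_O(P, lep, lem)`. -/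
def doubleOrderPoly (P : Type*) [Fintype P] (lep lem : P → P → Prop) :
    Set ((P → ℝ) × ℝ) :=
  convexHull ℝ
    (((fun f => (f, (1 : ℝ))) '' ((2 : ℝ) • orderPoly P lep)) ∪
     ((fun f => (f, (-1 : ℝ))) '' ((-2 : ℝ) • orderPoly P lem)))

/-- The valuation polytope (in reduced coordinates): `h : P → ℝ` such that
`0 ≤ ∑_{a ∈ F} h(a) ≤ 1` for every filter `F` of `(P, le)`. -/
def valPoly (P : Type*) [Fintype P] (le : P → P → Prop) : Set (P → ℝ) :=
  {h | ∀ F : Finset P, (∀ a ∈ F, ∀ b, le a b → b ∈ F) →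
        0 ≤ ∑ a ∈ F, h a ∧ ∑ a ∈ F, h a ≤ 1}

/-- The polar of a subset of `ℝ^P × ℝ` with respect to the standard inner product. -/
def polarPR (P : Type*) [Fintype P] (S : Set ((P → ℝ) × ℝ)) : Set ((P → ℝ) × ℝ) :=
  {y | ∀ x ∈ S, (∑ a, y.1 a * x.1 a) + y.2 * x.2 ≤ 1}


section Aux
open Finset
variable {P : Type*} [Fintype P] (le : P → P → Prop)

/-- Up-closed finsets (filters). -/
def IsFilt (F : Finset P) : Prop := ∀ a ∈ F, ∀ b, le a b → b ∈ F

lemma core_aux (w : P → ℝ) (α β : ℝ)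
    (hw : ∀ F : Finset P, IsFilt le F → α ≤ ∑ a ∈ F, w a ∧ ∑ a ∈ F, w a ≤ β) :
    ∀ (n : ℕ) (f : P → ℝ) (M : ℝ), 0 ≤ M →
      (∀ a b, le a b → f a ≤ f b) → (∀ a, 0 ≤ f a) → (∀ a, f a ≤ M) →
      (Finset.univ.filter (fun a => 0 < f a)).card ≤ n →
      M * α ≤ ∑ a, w a * f a ∧ ∑ a, w a * f a ≤ M * β := by
  classical
  have hempty := hw ∅ (by intro a ha; simp at ha)
  have hα : α ≤ 0 := by simpa using hempty.1
  have hβ : 0 ≤ β := by simpa using hempty.2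
  intro n
  induction n with
  | zero =>
    intro f M hM hmono hf0 hfM hcard
    have hsupp : Finset.univ.filter (fun a => 0 < f a) = ∅ :=
      Finset.card_eq_zero.mp (Nat.le_zero.mp hcard)
    have hfz : ∀ a, f a = 0 := by
      intro a
      by_contra hne
      have h1 : 0 < f a := lt_of_le_of_ne (hf0 a) (Ne.symm hne)
      have h2 : a ∈ Finset.univ.filter (fun a => 0 < f a) := by simp [h1]
      rw [hsupp] at h2; simp at h2
    have hz : ∑ a, w a * f a = 0 := by
      apply Finset.sum_eq_zero; intro a _; rw [hfz a]; ring
    rw [hz]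
    exact ⟨mul_nonpos_of_nonneg_of_nonpos hM hα, mul_nonneg hM hβ⟩
  | succ n ih =>
    intro f M hM hmono hf0 hfM hcard
    set F : Finset P := Finset.univ.filter (fun a => 0 < f a) with hF
    by_cases hFe : F = ∅
    · exact ih f M hM hmono hf0 hfM (by rw [← hF, hFe]; simp)
    · obtain ⟨a₀, ha₀F, ha₀min⟩ := Finset.exists_min_image F f (Finset.nonempty_of_ne_empty hFe)
      set t : ℝ := f a₀ with ht
      have ht0 : 0 < t := (Finset.mem_filter.mp ha₀F).2
      have htM : t ≤ M := hfM a₀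
      have hmin : ∀ a ∈ F, t ≤ f a := ha₀min
      have hmemF : ∀ a, a ∈ F ↔ 0 < f a := by intro a; simp [hF]
      set f' : P → ℝ := fun a => if 0 < f a then f a - t else 0 with hf'
      have hfz' : ∀ a, ¬ (0 < f a) → f a = 0 := fun a ha => le_antisymm (not_lt.mp ha) (hf0 a)
      have hf'0 : ∀ a, 0 ≤ f' a := by
        intro a; simp only [hf']
        split
        · rename_i hpos
          have : a ∈ F := (hmemF a).mpr hpos
          linarith [hmin a this]
        · exact le_refl 0
      have hf'M : ∀ a, f' a ≤ M - t := by
        intro a; simp only [hf']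
        split
        · linarith [hfM a]
        · linarith
      have hf'mono : ∀ a b, le a b → f' a ≤ f' b := by
        intro a b hab
        have hfab := hmono a b hab
        simp only [hf']
        by_cases hpa : 0 < f a
        · have hpb : 0 < f b := lt_of_lt_of_le hpa hfab
          simp [hpa, hpb]; linarith
        · by_cases hpb : 0 < f b
          · simp [hpa, hpb]
            have : b ∈ F := (hmemF b).mpr hpb
            linarith [hmin b this]
          · simp [hpa, hpb]
      have hFfilt : IsFilt le F := by
        intro a ha b hab
        have := (hmemF a).mp ha
        exact (hmemF b).mpr (lt_of_lt_of_le this (hmono a b hab))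
      -- sum splitting
      have hsplit : ∑ a, w a * f a = (∑ a, w a * f' a) + t * ∑ a ∈ F, w a := by
        have h1 : ∀ a, w a * f a = w a * f' a + (if a ∈ F then w a * t else 0) := by
          intro a
          simp only [hf', hmemF]
          by_cases hpa : 0 < f a
          · simp [hpa]; ring
          · simp [hpa, hfz' a hpa]
        rw [Finset.sum_congr rfl (fun a _ => h1 a), Finset.sum_add_distrib]
        congr 1
        rw [Finset.sum_ite_mem, Finset.univ_inter, Finset.mul_sum]
        exact Finset.sum_congr rfl (fun a _ => mul_comm (w a) t)
      -- card decrease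
      have hcard' : (Finset.univ.filter (fun a => 0 < f' a)).card ≤ n := by
        have hsub : Finset.univ.filter (fun a => 0 < f' a) ⊆ F.erase a₀ := by
          intro a ha
          simp only [Finset.mem_filter, hf'] at ha
          have ha' := ha.2
          by_cases hpa : 0 < f a
          · simp only [hpa, if_pos] at ha'
            refine Finset.mem_erase.mpr ⟨?_, (hmemF a).mpr hpa⟩
            intro hcontra
            rw [hcontra] at ha'
            simp only [← ht] at ha'
            linarith
          · simp [hpa] at ha'
        calc (Finset.univ.filter (fun a => 0 < f' a)).card
            ≤ (F.erase a₀).card := Finset.card_le_card hsub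
          _ ≤ F.card - 1 := le_of_eq (Finset.card_erase_of_mem ha₀F)
          _ ≤ n := by omega
      have hIH := ih f' (M - t) (by linarith) hf'mono hf'0 hf'M hcard'
      have hwF := hw F hFfilt
      constructor
      · have h1 : (M - t) * α ≤ ∑ a, w a * f' a := hIH.1
        have h2 : t * α ≤ t * ∑ a ∈ F, w a := by
          apply mul_le_mul_of_nonneg_left hwF.1 (le_of_lt ht0)
        rw [hsplit]; nlinarith
      · have h1 : ∑ a, w a * f' a ≤ (M - t) * β := hIH.2
        have h2 : t * ∑ a ∈ F, w a ≤ t * β := by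
          apply mul_le_mul_of_nonneg_left hwF.2 (le_of_lt ht0)
        rw [hsplit]; nlinarith

lemma core (w f : P → ℝ) (α β M : ℝ) (hM : 0 ≤ M)
    (hmono : ∀ a b, le a b → f a ≤ f b) (hf0 : ∀ a, 0 ≤ f a) (hfM : ∀ a, f a ≤ M)
    (hw : ∀ F : Finset P, IsFilt le F → α ≤ ∑ a ∈ F, w a ∧ ∑ a ∈ F, w a ≤ β) :
    M * α ≤ ∑ a, w a * f a ∧ ∑ a, w a * f a ≤ M * β :=
  core_aux le w α β hw _ f M hM hmono hf0 hfM le_rfl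


/-- certificate inequality -/
lemma cert [DecidableEq P] {ι : Type*} [Fintype ι] (mem : ι → Finset P) (hmem : ∀ i, IsFilt le (mem i))
    (w : P → ℝ) (μ ν : ℝ) (hμ : 0 ≤ μ) (hν : 0 ≤ ν)
    (hw : ∀ F : Finset P, IsFilt le F → -μ ≤ ∑ a ∈ F, w a ∧ ∑ a ∈ F, w a ≤ ν)
    (y : ι → ℝ) (horth : ∀ a : P, ∑ i, (if a ∈ mem i then y i else 0) = 0) :
    0 ≤ ∑ i, (if 0 ≤ y i then min ν ((∑ a ∈ mem i, w a) + μ) else max 0 (∑ a ∈ mem i, w a)) * y i := by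
  classical
  set g : ι → ℝ := fun i => ∑ a ∈ mem i, w a with hg
  set aP : ι → ℝ := fun i => max (y i) 0 with haP
  set cP : ι → ℝ := fun i => max (-y i) 0 with hcP
  have haP0 : ∀ i, 0 ≤ aP i := fun i => le_max_right _ _
  have hcP0 : ∀ i, 0 ≤ cP i := fun i => le_max_right _ _
  set a1 : ι → ℝ := fun i => if ν ≤ g i + μ then aP i else 0 with ha1
  set a2 : ι → ℝ := fun i => if ν ≤ g i + μ then 0 else aP i with ha2
  set c3 : ι → ℝ := fun i => if g i ≤ 0 then cP i else 0 with hc3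
  set c4 : ι → ℝ := fun i => if g i ≤ 0 then 0 else cP i with hc4
  have ha10 : ∀ i, 0 ≤ a1 i := by intro i; simp only [ha1]; split; exacts [haP0 i, le_refl 0]
  have ha20 : ∀ i, 0 ≤ a2 i := by intro i; simp only [ha2]; split; exacts [le_refl 0, haP0 i]
  have hc30 : ∀ i, 0 ≤ c3 i := by intro i; simp only [hc3]; split; exacts [hcP0 i, le_refl 0]
  have hc40 : ∀ i, 0 ≤ c4 i := by intro i; simp only [hc4]; split; exacts [le_refl 0, hcP0 i]
  -- step 1 : pointwise identity
  have step1 : ∀ i, (if 0 ≤ y i then min ν (g i + μ) else max 0 (g i)) * y i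
      = (a1 i * ν + a2 i * (g i + μ)) - c4 i * g i := by
    intro i
    by_cases h1 : 0 ≤ y i
    · have haPy : aP i = y i := max_eq_left h1
      have hcPy : cP i = 0 := max_eq_right (neg_nonpos.mpr h1)
      have hc4z : c4 i = 0 := by simp only [hc4, hcPy]; split <;> rfl
      rw [if_pos h1, hc4z]
      by_cases h2 : ν ≤ g i + μ
      · rw [min_eq_left h2]
        simp only [ha1, ha2, if_pos h2, haPy]
        ring
      · rw [min_eq_right (le_of_not_ge h2)]
        simp only [ha1, ha2, if_neg h2, haPy]
        ring
    · have haPy : aP i = 0 := max_eq_right (le_of_not_ge h1)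
      have hcPy : cP i = -y i := max_eq_left (by linarith [le_of_not_ge h1])
      have ha1z : a1 i = 0 := by simp only [ha1, haPy]; split <;> rfl
      have ha2z : a2 i = 0 := by simp only [ha2, haPy]; split <;> rfl
      rw [if_neg h1, ha1z, ha2z]
      by_cases h3 : g i ≤ 0
      · rw [max_eq_left h3]
        simp only [hc4, if_pos h3]
        ring
      · rw [max_eq_right (le_of_not_ge h3)]
        simp only [hc4, if_neg h3, hcPy]
        ring
  rw [Finset.sum_congr rfl (fun i _ => step1 i)]
  -- swap lemma
  have hswap : ∀ d : ι → ℝ, ∑ i, d i * g i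
      = ∑ x : P, w x * (∑ i, if x ∈ mem i then d i else 0) := by
    intro d
    have h1 : ∀ i, d i * g i = ∑ x : P, (if x ∈ mem i then d i * w x else 0) := by
      intro i
      rw [Finset.sum_ite_mem, Finset.univ_inter]
      simp only [hg]
      rw [Finset.mul_sum]
    rw [Finset.sum_congr rfl (fun i _ => h1 i), Finset.sum_comm]
    refine Finset.sum_congr rfl (fun x _ => ?_)
    rw [Finset.mul_sum]
    refine Finset.sum_congr rfl (fun i _ => ?_)
    by_cases hx : x ∈ mem i <;> simp [hx, mul_comm]
  set N1 : P → ℝ := fun x => ∑ i, if x ∈ mem i then a1 i else 0 with hN1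
  set N2 : P → ℝ := fun x => ∑ i, if x ∈ mem i then a2 i else 0 with hN2
  set N3 : P → ℝ := fun x => ∑ i, if x ∈ mem i then c3 i else 0 with hN3
  set N4 : P → ℝ := fun x => ∑ i, if x ∈ mem i then c4 i else 0 with hN4
  set Y1 : ℝ := ∑ i, a1 i with hY1
  set Y2 : ℝ := ∑ i, a2 i with hY2
  have hY10 : 0 ≤ Y1 := Finset.sum_nonneg (fun i _ => ha10 i)
  have hY20 : 0 ≤ Y2 := Finset.sum_nonneg (fun i _ => ha20 i)
  -- balance
  have hbal : ∀ x, N1 x + N2 x = N3 x + N4 x := by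
    intro x
    have h0 := horth x
    have hA : N1 x + N2 x = ∑ i, (if x ∈ mem i then aP i else 0) := by
      simp only [hN1, hN2]
      rw [← Finset.sum_add_distrib]
      refine Finset.sum_congr rfl (fun i _ => ?_)
      by_cases hx : x ∈ mem i <;> by_cases h2 : ν ≤ g i + μ <;>
        simp [ha1, ha2, hx, h2]
    have hC : N3 x + N4 x = ∑ i, (if x ∈ mem i then cP i else 0) := by
      simp only [hN3, hN4]
      rw [← Finset.sum_add_distrib]
      refine Finset.sum_congr rfl (fun i _ => ?_)
      by_cases hx : x ∈ mem i <;> by_cases h3 : g i ≤ 0 <;>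
        simp [hc3, hc4, hx, h3]
    have hAC : (∑ i, (if x ∈ mem i then aP i else 0)) - (∑ i, (if x ∈ mem i then cP i else 0)) = 0 := by
      rw [← Finset.sum_sub_distrib, ← h0]
      refine Finset.sum_congr rfl (fun i _ => ?_)
      by_cases hx : x ∈ mem i
      · simp only [hx, if_pos, haP, hcP]
        exact max_zero_sub_eq_self (y i)
      · simp [hx]
    rw [hA, hC]
    linarith
  set R : P → ℝ := fun x => min (N2 x) (N3 x) with hR
  set S : P → ℝ := fun x => min (N1 x) (N4 x) with hS
  have hRS : ∀ x, R x - S x = N2 x - N4 x := by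
    intro x
    have hb := hbal x
    rcases le_total (N2 x) (N3 x) with h | h
    · rw [hR, hS]
      simp only []
      rw [min_eq_left h, min_eq_right (by linarith : N4 x ≤ N1 x)]
    · rw [hR, hS]
      simp only []
      rw [min_eq_right h, min_eq_left (by linarith : N1 x ≤ N4 x)]
      linarith
  -- monotonicity and bounds
  have hgen : ∀ d : ι → ℝ, (∀ i, 0 ≤ d i) →
      (∀ a b, le a b → (∑ i, if a ∈ mem i then d i else 0) ≤ ∑ i, if b ∈ mem i then d i else 0)
      ∧ (∀ x, 0 ≤ ∑ i, if x ∈ mem i then d i else 0)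
      ∧ (∀ x, (∑ i, if x ∈ mem i then d i else 0) ≤ ∑ i, d i) := by
    intro d hd
    refine ⟨fun a b hab => ?_, fun x => ?_, fun x => ?_⟩
    · refine Finset.sum_le_sum (fun i _ => ?_)
      by_cases hx : a ∈ mem i
      · have hb : b ∈ mem i := hmem i a hx b hab
        simp [hx, hb]
      · by_cases hb : b ∈ mem i <;> simp [hx, hb, hd i]
    · exact Finset.sum_nonneg (fun i _ => by by_cases hx : x ∈ mem i <;> simp [hx, hd i])
    · refine Finset.sum_le_sum (fun i _ => ?_)
      by_cases hx : x ∈ mem i <;> simp [hx, hd i]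
  obtain ⟨hm1, hz1, hb1⟩ := hgen a1 ha10
  obtain ⟨hm2, hz2, hb2⟩ := hgen a2 ha20
  obtain ⟨hm3, hz3, hb3⟩ := hgen c3 hc30
  obtain ⟨hm4, hz4, hb4⟩ := hgen c4 hc40
  have hRmono : ∀ a b, le a b → R a ≤ R b := by
    intro a b hab
    exact min_le_min (hm2 a b hab) (hm3 a b hab)
  have hSmono : ∀ a b, le a b → S a ≤ S b := by
    intro a b hab
    exact min_le_min (hm1 a b hab) (hm4 a b hab)
  have hR0 : ∀ x, 0 ≤ R x := fun x => le_min (hz2 x) (hz3 x)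
  have hS0 : ∀ x, 0 ≤ S x := fun x => le_min (hz1 x) (hz4 x)
  have hRb : ∀ x, R x ≤ Y2 := fun x => le_trans (min_le_left _ _) (hb2 x)
  have hSb : ∀ x, S x ≤ Y1 := fun x => le_trans (min_le_left _ _) (hb1 x)
  have hcR := core le w R (-μ) ν Y2 hY20 hRmono hR0 hRb hw
  have hcS := core le w S (-μ) ν Y1 hY10 hSmono hS0 hSb hw
  -- assemble
  have e1 : ∑ i, ((a1 i * ν + a2 i * (g i + μ)) - c4 i * g i)
      = ν * Y1 + μ * Y2 + ((∑ i, a2 i * g i) - ∑ i, c4 i * g i) := by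
    rw [Finset.sum_sub_distrib, Finset.sum_add_distrib]
    have e11 : ∑ i, a1 i * ν = ν * Y1 := by
      rw [hY1, Finset.mul_sum]
      exact Finset.sum_congr rfl (fun i _ => mul_comm _ _)
    have e12 : ∑ i, a2 i * (g i + μ) = (∑ i, a2 i * g i) + μ * Y2 := by
      rw [hY2, Finset.mul_sum, ← Finset.sum_add_distrib]
      exact Finset.sum_congr rfl (fun i _ => by ring)
    rw [e11, e12]
    ring
  rw [e1, hswap a2, hswap c4]
  have e2 : (∑ x, w x * N2 x) - (∑ x, w x * N4 x) = (∑ x, w x * R x) - ∑ x, w x * S x := by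
    rw [← Finset.sum_sub_distrib, ← Finset.sum_sub_distrib]
    refine Finset.sum_congr rfl (fun x _ => ?_)
    calc w x * N2 x - w x * N4 x = w x * (N2 x - N4 x) := by ring
      _ = w x * (R x - S x) := by rw [← hRS x]
      _ = w x * R x - w x * S x := by ring
  have : (∑ x, w x * N2 x) - (∑ x, w x * N4 x) ≥ Y2 * (-μ) - Y1 * ν := by
    rw [e2]
    have := hcR.1
    have := hcS.2
    linarith
  simp only [hN2, hN4] at this
  linarith


lemma sandwich (μ ν : ℝ) (hμ : 0 ≤ μ) (hν : 0 ≤ ν) (w : P → ℝ)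
    (hw : ∀ F : Finset P, IsFilt le F → -μ ≤ ∑ a ∈ F, w a ∧ ∑ a ∈ F, w a ≤ ν) :
    ∃ p : P → ℝ, ∀ F : Finset P, IsFilt le F →
      (0 ≤ ∑ a ∈ F, p a ∧ ∑ a ∈ F, p a ≤ ν) ∧
      (0 ≤ (∑ a ∈ F, p a) - (∑ a ∈ F, w a) ∧ (∑ a ∈ F, p a) - (∑ a ∈ F, w a) ≤ μ) := by
  classical
  set ι := {F : Finset P // IsFilt le F} with hι
  set g : ι → ℝ := fun F => ∑ a ∈ F.1, w a with hg
  set L : ι → ℝ := fun F => max 0 (g F) with hL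
  set U : ι → ℝ := fun F => min ν (g F + μ) with hU
  have hLU : ∀ F : ι, L F ≤ U F := by
    intro F
    obtain ⟨h1, h2⟩ := hw F.1 F.2
    refine max_le (le_min hν (by linarith)) (le_min h2 (by linarith))
  set Φ : (P → ℝ) →ₗ[ℝ] (ι → ℝ) :=
    { toFun := fun p F => ∑ a ∈ F.1, p a
      map_add' := by
        intro p q; funext F
        simpa using Finset.sum_add_distrib
      map_smul' := by
        intro c p; funext F
        simp [Finset.mul_sum] } with hΦ
  have hΦapp : ∀ (p : P → ℝ) (F : ι), Φ p F = ∑ a ∈ F.1, p a := fun p F => rfl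
  set K := LinearMap.range Φ with hK
  have hmain : ¬ Disjoint (Set.Icc L U) (K : Set (ι → ℝ)) := by
    intro hdisj
    obtain ⟨f, u, v, hfu, huv, hfv⟩ :=
      geometric_hahn_banach_compact_closed (convex_Icc L U) isCompact_Icc
        K.convex K.closed_of_finiteDimensional hdisj
    -- f vanishes on K
    have hK0 : ∀ p : P → ℝ, f (Φ p) = 0 := by
      intro p
      have hall : ∀ c : ℝ, v < c * f (Φ p) := by
        intro c
        have hmem : (c • Φ p) ∈ K := by
          rw [hK]
          exact ⟨c • p, by simp⟩
        have := hfv _ hmem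
        simpa [smul_eq_mul] using this
      by_contra hne
      have := hall ((v - 1) / f (Φ p))
      rw [div_mul_cancel₀ _ hne] at this
      linarith
    have hv0 : v < 0 := by
      have h0K : (0 : ι → ℝ) ∈ K := K.zero_mem
      have := hfv 0 h0K
      simpa using this
    -- coordinates of f
    set y : ι → ℝ := fun F => f (fun G => if F = G then 1 else 0) with hy
    have hrepr : ∀ x : ι → ℝ, f x = ∑ F, x F * y F := by
      intro x
      conv_lhs => rw [pi_eq_sum_univ x]
      rw [map_sum]
      exact Finset.sum_congr rfl (fun F _ => by rw [map_smul]; simp [hy, smul_eq_mul])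
    have horth : ∀ a : P, ∑ F : ι, (if a ∈ F.1 then y F else 0) = 0 := by
      intro a
      have h0 := hK0 (fun b => if b = a then 1 else 0)
      rw [hrepr] at h0
      have hcoord : ∀ F : ι, Φ (fun b => if b = a then (1:ℝ) else 0) F
          = if a ∈ F.1 then (1:ℝ) else 0 := by
        intro F
        rw [hΦapp]
        exact Finset.sum_ite_eq' F.1 a (fun _ => (1:ℝ))
      have heq : ∑ F : ι, (if a ∈ F.1 then y F else 0)
          = ∑ F : ι, Φ (fun b => if b = a then 1 else 0) F * y F := by
        refine Finset.sum_congr rfl (fun F _ => ?_)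
        rw [hcoord F]
        by_cases hx : a ∈ F.1 <;> simp [hx]
      rw [heq, h0]
    -- the contradicting point
    set bst : ι → ℝ := fun F => if 0 ≤ y F then U F else L F with hbst
    have hbB : bst ∈ Set.Icc L U := by
      rw [Set.mem_Icc]
      constructor <;> intro F <;> simp only [hbst] <;> split
      · exact hLU F
      · exact le_refl _
      · exact le_refl _
      · exact hLU F
    have hpos : 0 ≤ f bst := by
      rw [hrepr]
      have := cert le (fun F : ι => F.1) (fun F => F.2) w μ ν hμ hν hw y horth
      simpa [hbst, hU, hL, hg] using this
    have := hfu bst hbB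
    linarith
  obtain ⟨x, hxB, hxK⟩ := Set.not_disjoint_iff.mp hmain
  obtain ⟨p, hp⟩ := hxK
  refine ⟨p, fun F hF => ?_⟩
  obtain ⟨hx1, hx2⟩ := Set.mem_Icc.mp hxB
  have h1 := hx1 ⟨F, hF⟩
  have h2 := hx2 ⟨F, hF⟩
  rw [← hp, hΦapp] at h1 h2
  simp only [hL, hU, hg] at h1 h2
  constructor
  · exact ⟨le_trans (le_max_left _ _) h1, le_trans h2 (min_le_left _ _)⟩
  · have h1' := le_trans (le_max_right _ _) h1
    have h2' := le_trans h2 (min_le_right _ _)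
    constructor <;> linarith


/-- convexity of halfspace-type sets in pairs, linear in the pair -/
lemma convex_pairIneq (m : P → ℝ) (s : ℝ) :
    Convex ℝ {x : (P → ℝ) × ℝ | (∑ a, m a * x.1 a) + s * x.2 ≤ 1} := by
  intro x hx y hy a b ha hb hab
  simp only [Set.mem_setOf_eq] at *
  have hfst : ∀ i, (a • x + b • y).1 i = a * x.1 i + b * y.1 i := by
    intro i; simp [Prod.add_def, Prod.smul_def]
  have hsnd : (a • x + b • y).2 = a * x.2 + b * y.2 := by
    simp [Prod.add_def, Prod.smul_def]
  have hsum : ∑ i, m i * (a • x + b • y).1 i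
      = a * (∑ i, m i * x.1 i) + b * (∑ i, m i * y.1 i) := by
    rw [Finset.mul_sum, Finset.mul_sum, ← Finset.sum_add_distrib]
    exact Finset.sum_congr rfl (fun i _ => by rw [hfst i]; ring)
  rw [hsum, hsnd]
  nlinarith

/-- convexity of the polar -/
lemma convex_polarPR (S : Set ((P → ℝ) × ℝ)) : Convex ℝ (polarPR P S) := by
  intro x hx y hy a b ha hb hab
  intro z hz
  have h1 := hx z hz
  have h2 := hy z hz
  have hfst : ∀ i, (a • x + b • y).1 i = a * x.1 i + b * y.1 i := by
    intro i; simp [Prod.add_def, Prod.smul_def]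
  have hsnd : (a • x + b • y).2 = a * x.2 + b * y.2 := by
    simp [Prod.add_def, Prod.smul_def]
  have hsum : ∑ i, (a • x + b • y).1 i * z.1 i
      = a * (∑ i, x.1 i * z.1 i) + b * (∑ i, y.1 i * z.1 i) := by
    rw [Finset.mul_sum, Finset.mul_sum, ← Finset.sum_add_distrib]
    exact Finset.sum_congr rfl (fun i _ => by rw [hfst i]; ring)
  show (∑ i, (a • x + b • y).1 i * z.1 i) + (a • x + b • y).2 * z.2 ≤ 1
  rw [hsum, hsnd]
  nlinarith


/-- generator points of the twisted prism lie in the polar -/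
lemma gen_subset_polar :
    (((fun h => (h, (1 : ℝ))) '' (-(valPoly P le))) ∪
     ((fun h => (h, (-1 : ℝ))) '' (valPoly P le))) ⊆ polarPR P (doubleOrderPoly P le le) := by
  classical
  rintro z (⟨m, hm, rfl⟩ | ⟨m, hm, rfl⟩) <;> intro x hx
  · -- z = (m, 1) with -m ∈ valPoly
    rw [Set.mem_neg] at hm
    have hcore : ∀ f ∈ orderPoly P le, 0 ≤ ∑ a, (-m) a * f a ∧ ∑ a, (-m) a * f a ≤ 1 := by
      intro f hf
      have h := core le (-m) f 0 1 1 zero_le_one hf.2 (fun a => (hf.1 a).1)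
        (fun a => (hf.1 a).2) (fun F hF => hm F hF)
      simpa using h
    show (∑ a, m a * x.1 a) + 1 * x.2 ≤ 1
    have hconv := convex_pairIneq (P := P) m 1
    have hsub : (((fun f => (f, (1 : ℝ))) '' ((2 : ℝ) • orderPoly P le)) ∪
        ((fun f => (f, (-1 : ℝ))) '' ((-2 : ℝ) • orderPoly P le))) ⊆
        {x : (P → ℝ) × ℝ | (∑ a, m a * x.1 a) + 1 * x.2 ≤ 1} := by
      rintro _ (⟨f2, ⟨f, hf, rfl⟩, rfl⟩ | ⟨f2, ⟨f, hf, rfl⟩, rfl⟩)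
      · have h := (hcore f hf).1
        have hs : ∑ a, m a * ((2:ℝ) • f) a = 2 * ∑ a, m a * f a := by
          rw [Finset.mul_sum]
          exact Finset.sum_congr rfl (fun a _ => by simp only [Pi.smul_apply, smul_eq_mul]; ring)
        simp only [Set.mem_setOf_eq, hs]
        have : ∑ a, (-m) a * f a = - ∑ a, m a * f a := by
          rw [← Finset.sum_neg_distrib]
          exact Finset.sum_congr rfl (fun a _ => by simp only [Pi.neg_apply]; ring)
        rw [this] at h
        linarith
      · have h := (hcore f hf).2
        have hs : ∑ a, m a * ((-2:ℝ) • f) a = -2 * ∑ a, m a * f a := by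
          rw [show (-2:ℝ) * ∑ a, m a * f a = ∑ a, -2 * (m a * f a) by rw [Finset.mul_sum]]
          exact Finset.sum_congr rfl (fun a _ => by simp only [Pi.smul_apply, smul_eq_mul]; ring)
        simp only [Set.mem_setOf_eq, hs]
        have : ∑ a, (-m) a * f a = - ∑ a, m a * f a := by
          rw [← Finset.sum_neg_distrib]
          exact Finset.sum_congr rfl (fun a _ => by simp only [Pi.neg_apply]; ring)
        rw [this] at h
        linarith
    exact convexHull_min hsub hconv hx
  · -- z = (m, -1) with m ∈ valPoly
    have hcore : ∀ f ∈ orderPoly P le, 0 ≤ ∑ a, m a * f a ∧ ∑ a, m a * f a ≤ 1 := by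
      intro f hf
      have h := core le m f 0 1 1 zero_le_one hf.2 (fun a => (hf.1 a).1)
        (fun a => (hf.1 a).2) (fun F hF => hm F hF)
      simpa using h
    show (∑ a, m a * x.1 a) + (-1) * x.2 ≤ 1
    have hconv := convex_pairIneq (P := P) m (-1)
    have hsub : (((fun f => (f, (1 : ℝ))) '' ((2 : ℝ) • orderPoly P le)) ∪
        ((fun f => (f, (-1 : ℝ))) '' ((-2 : ℝ) • orderPoly P le))) ⊆
        {x : (P → ℝ) × ℝ | (∑ a, m a * x.1 a) + (-1) * x.2 ≤ 1} := by
      rintro _ (⟨f2, ⟨f, hf, rfl⟩, rfl⟩ | ⟨f2, ⟨f, hf, rfl⟩, rfl⟩)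
      · have h := (hcore f hf).2
        have hs : ∑ a, m a * ((2:ℝ) • f) a = 2 * ∑ a, m a * f a := by
          rw [Finset.mul_sum]
          exact Finset.sum_congr rfl (fun a _ => by simp only [Pi.smul_apply, smul_eq_mul]; ring)
        simp only [Set.mem_setOf_eq, hs]
        linarith
      · have h := (hcore f hf).1
        have hs : ∑ a, m a * ((-2:ℝ) • f) a = -2 * ∑ a, m a * f a := by
          rw [show (-2:ℝ) * ∑ a, m a * f a = ∑ a, -2 * (m a * f a) by rw [Finset.mul_sum]]
          exact Finset.sum_congr rfl (fun a _ => by simp only [Pi.smul_apply, smul_eq_mul]; ring)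
        simp only [Set.mem_setOf_eq, hs]
        linarith
    exact convexHull_min hsub hconv hx


theorem polar_eq :
    polarPR P (doubleOrderPoly P le le) =
      convexHull ℝ
        (((fun h => (h, (1 : ℝ))) '' (-(valPoly P le))) ∪
         ((fun h => (h, (-1 : ℝ))) '' (valPoly P le))) := by
  classical
  apply Set.Subset.antisymm
  · -- hard direction
    rintro ⟨w, t⟩ hy
    -- indicator functions of filters
    have hchi : ∀ F : Finset P, IsFilt le F →
        (fun a => if a ∈ F then (1:ℝ) else 0) ∈ orderPoly P le := by
      intro F hF
      constructor
      · intro a; by_cases ha : a ∈ F <;> simp [ha]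
      · intro a b hab
        by_cases ha : a ∈ F
        · have hb : b ∈ F := hF a ha b hab
          simp [ha, hb]
        · by_cases hb : b ∈ F <;> simp [ha, hb]
    -- the two linear constraints for each filter
    have hFb : ∀ F : Finset P, IsFilt le F →
        2 * (∑ a ∈ F, w a) + t ≤ 1 ∧ -(2 * (∑ a ∈ F, w a)) - t ≤ 1 := by
      intro F hF
      set χ : P → ℝ := fun a => if a ∈ F then (1:ℝ) else 0 with hχ
      have hsum2 : ∑ a, w a * ((2:ℝ) • χ) a = 2 * ∑ a ∈ F, w a := by
        have h1 : ∀ a, w a * ((2:ℝ) • χ) a = if a ∈ F then 2 * w a else 0 := by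
          intro a
          by_cases ha : a ∈ F <;> simp [hχ, ha] <;> ring
        rw [Finset.sum_congr rfl (fun a _ => h1 a), Finset.sum_ite_mem, Finset.univ_inter,
          Finset.mul_sum]
      have hsumm2 : ∑ a, w a * ((-2:ℝ) • χ) a = -(2 * ∑ a ∈ F, w a) := by
        have h1 : ∀ a, w a * ((-2:ℝ) • χ) a = if a ∈ F then (-2) * w a else 0 := by
          intro a
          by_cases ha : a ∈ F <;> simp [hχ, ha] <;> ring
        rw [Finset.sum_congr rfl (fun a _ => h1 a), Finset.sum_ite_mem, Finset.univ_inter]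
        rw [show -(2 * ∑ a ∈ F, w a) = ∑ a ∈ F, (-2) * w a by rw [Finset.mul_sum]; rw [← Finset.sum_neg_distrib]; exact Finset.sum_congr rfl (fun a _ => by ring)]
      constructor
      · have hx1 : (((2:ℝ) • χ, (1:ℝ)) : (P → ℝ) × ℝ) ∈ doubleOrderPoly P le le := by
          apply subset_convexHull
          exact Or.inl ⟨(2:ℝ) • χ, Set.smul_mem_smul_set (hchi F hF), rfl⟩
        have := hy _ hx1
        simp only at this
        rw [hsum2] at this
        linarith
      · have hx2 : ((((-2):ℝ) • χ, (-1:ℝ)) : (P → ℝ) × ℝ) ∈ doubleOrderPoly P le le := by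
          apply subset_convexHull
          exact Or.inr ⟨((-2):ℝ) • χ, Set.smul_mem_smul_set (hchi F hF), rfl⟩
        have := hy _ hx2
        simp only at this
        rw [hsumm2] at this
        linarith
    have hempty : IsFilt le (∅ : Finset P) := by intro a ha; simp at ha
    have ht1 : t ≤ 1 := by have := (hFb ∅ hempty).1; simpa using this
    have ht2 : -t ≤ 1 := by have := (hFb ∅ hempty).2; simpa using this
    set μ : ℝ := (1 + t) / 2 with hμdef
    set ν : ℝ := (1 - t) / 2 with hνdef
    have hμ0 : 0 ≤ μ := by rw [hμdef]; linarith
    have hν0 : 0 ≤ ν := by rw [hνdef]; linarith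
    have hwbound : ∀ F : Finset P, IsFilt le F →
        -μ ≤ ∑ a ∈ F, w a ∧ ∑ a ∈ F, w a ≤ ν := by
      intro F hF
      obtain ⟨h1, h2⟩ := hFb F hF
      constructor
      · rw [hμdef]; linarith
      · rw [hνdef]; linarith
    obtain ⟨p, hp⟩ := sandwich le μ ν hμ0 hν0 w hwbound
    by_cases htop : t = 1
    · -- w ∈ -valPoly
      have hwv : w ∈ -(valPoly P le) := by
        rw [Set.mem_neg]
        intro F hF
        obtain ⟨h1, h2⟩ := hwbound F hF
        have hs : ∑ a ∈ F, (-w) a = -∑ a ∈ F, w a := by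
          rw [← Finset.sum_neg_distrib]
          exact Finset.sum_congr rfl (fun a _ => rfl)
        rw [hs]
        constructor
        · have : ν = 0 := by rw [hνdef, htop]; ring
          rw [this] at h2; linarith
        · have : μ = 1 := by rw [hμdef, htop]; ring
          rw [this] at h1; linarith
      apply subset_convexHull
      left
      exact ⟨w, hwv, by rw [htop]⟩
    by_cases hbot : t = -1
    · have hwv : w ∈ valPoly P le := by
        intro F hF
        obtain ⟨h1, h2⟩ := hwbound F hF
        constructor
        · have : μ = 0 := by rw [hμdef, hbot]; ring
          rw [this] at h1; linarith
        · have : ν = 1 := by rw [hνdef, hbot]; ring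
          rw [this] at h2; linarith
      apply subset_convexHull
      right
      exact ⟨w, hwv, by rw [hbot]⟩
    · -- interior case
      have hμpos : 0 < μ := by
        rw [hμdef]
        rcases lt_or_eq_of_le ht2 with h | h
        · linarith
        · exfalso; exact hbot (by linarith)
      have hνpos : 0 < ν := by
        rw [hνdef]
        rcases lt_or_eq_of_le ht1 with h | h
        · linarith
        · exfalso; exact htop (by linarith)
      set uu : P → ℝ := fun a => μ⁻¹ * (p a - w a) with huu
      set vv : P → ℝ := fun a => ν⁻¹ * p a with hvv
      have huuv : uu ∈ valPoly P le := by
        intro F hF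
        obtain ⟨_, h2⟩ := hp F hF
        have hs : ∑ a ∈ F, uu a = μ⁻¹ * ((∑ a ∈ F, p a) - ∑ a ∈ F, w a) := by
          rw [← Finset.sum_sub_distrib, Finset.mul_sum]
        rw [hs]
        constructor
        · exact mul_nonneg (inv_nonneg.mpr hμ0) h2.1
        · calc μ⁻¹ * ((∑ a ∈ F, p a) - ∑ a ∈ F, w a) ≤ μ⁻¹ * μ :=
                mul_le_mul_of_nonneg_left h2.2 (inv_nonneg.mpr hμ0)
            _ = 1 := inv_mul_cancel₀ (ne_of_gt hμpos)
      have hvvv : vv ∈ valPoly P le := by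
        intro F hF
        obtain ⟨h1, _⟩ := hp F hF
        have hs : ∑ a ∈ F, vv a = ν⁻¹ * ∑ a ∈ F, p a := by
          rw [Finset.mul_sum]
        rw [hs]
        constructor
        · exact mul_nonneg (inv_nonneg.mpr hν0) h1.1
        · calc ν⁻¹ * (∑ a ∈ F, p a) ≤ ν⁻¹ * ν :=
                mul_le_mul_of_nonneg_left h1.2 (inv_nonneg.mpr hν0)
            _ = 1 := inv_mul_cancel₀ (ne_of_gt hνpos)
      -- (w, t) = μ • (-uu, 1) + ν • (vv, -1)
      have hq1 : ((-uu, (1:ℝ)) : (P → ℝ) × ℝ) ∈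
          convexHull ℝ (((fun h => (h, (1 : ℝ))) '' (-(valPoly P le))) ∪
            ((fun h => (h, (-1 : ℝ))) '' (valPoly P le))) := by
        apply subset_convexHull
        left
        exact ⟨-uu, Set.mem_neg.mpr (by simpa using huuv), rfl⟩
      have hq2 : ((vv, (-1:ℝ)) : (P → ℝ) × ℝ) ∈
          convexHull ℝ (((fun h => (h, (1 : ℝ))) '' (-(valPoly P le))) ∪
            ((fun h => (h, (-1 : ℝ))) '' (valPoly P le))) := by
        apply subset_convexHull
        right
        exact ⟨vv, hvvv, rfl⟩
      have hcomb := (convex_convexHull ℝ (((fun h => (h, (1 : ℝ))) '' (-(valPoly P le))) ∪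
            ((fun h => (h, (-1 : ℝ))) '' (valPoly P le)))) hq1 hq2 hμ0 hν0
            (by rw [hμdef, hνdef]; ring)
      have heq : μ • ((-uu, (1:ℝ)) : (P → ℝ) × ℝ) + ν • ((vv, (-1:ℝ)) : (P → ℝ) × ℝ)
          = ((w, t) : (P → ℝ) × ℝ) := by
        have h1 : μ • (-uu) + ν • vv = w := by
          funext a
          simp only [Pi.add_apply, Pi.smul_apply, Pi.neg_apply, huu, hvv, smul_eq_mul]
          have hμne : μ ≠ 0 := ne_of_gt hμpos
          have hνne : ν ≠ 0 := ne_of_gt hνpos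
          field_simp
          ring
        have h2 : μ * 1 + ν * (-1) = t := by rw [hμdef, hνdef]; ring
        rw [Prod.ext_iff]
        refine ⟨?_, ?_⟩
        · simpa using h1
        · simpa using h2
      rw [heq] at hcomb
      exact hcomb
  · exact convexHull_min (gen_subset_polar le) (convex_polarPR (doubleOrderPoly P le le))


end Aux

/-- For the double poset induced by a poset, the polar of the double order polytope
is the twisted prism `conv(((−Val(P)) × {1}) ∪ (Val(P) × {−1}))` over the negated
valuation polytope. -/
theorem polar_doubleOrderPoly_eq_twistedPrism_valPoly
    (P : Type*) [Fintype P] (le : P → P → Prop) (h : IsPartialOrder P le) :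
    polarPR P (doubleOrderPoly P le le) =
      convexHull ℝ
        (((fun h => (h, (1 : ℝ))) '' (-(valPoly P le))) ∪
         ((fun h => (h, (-1 : ℝ))) '' (valPoly P le))) :=
  polar_eq le
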